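/- In a PET, if p and q are sharp effects with p orthogonal to q (p + q defined), then p + q is sharp and is the least upper bound of p and q among all effects. -/
import Mathlib


universe u v

/-- An effect algebra: a set with a partially defined commutative associative
addition (encoded via `Option`), a zero, a one, such that `x + 0 = x`,
`x + 1` defined implies `x = 0`, and every element has a unique complement. -/
structure EffectAlgebra (E : Type u) where
  add : E → E → Option E
  zero : E
  one : E
  add_comm' : ∀ x y, add x y = add y x
  add_assoc' : ∀ x y z xy xyz, add x y = some xy → add xy z = some xyz →
      ∃ yz, add y z = some yz ∧ add x yz = some xyz
  add_zero' : ∀ x, add x zero = some x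
  one_max : ∀ x y, add x one = some y → x = zero
  compl_exists : ∀ x, ∃ y, add x y = some one
  compl_unique : ∀ x y₁ y₂, add x y₁ = some one → add x y₂ = some one → y₁ = y₂

namespace EffectAlgebra

variable {E : Type u} (a : EffectAlgebra E)

/-- The natural order: `x ≤ y` iff there is `z` with `x + z = y`. -/
def le (x y : E) : Prop := ∃ z, a.add x z = some y

/-- The complement `x⊥`: the unique element with `x + x⊥ = 1`. -/
noncomputable def compl (x : E) : E := Classical.choose (a.compl_exists x)

theorem compl_spec (x : E) : a.add x (a.compl x) = some a.one :=
  Classical.choose_spec (a.compl_exists x)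

end EffectAlgebra

open CategoryTheory

/-- An effect theory: a category with a designated trivial system `I` such
that each `Eff(A) := Hom(A, I)` is an effect algebra and precomposition
preserves zero and partial sums. -/
structure EffectTheory (C : Type u) [Category.{v} C] where
  I : C
  ea : ∀ A : C, EffectAlgebra (A ⟶ I)
  comp_zero : ∀ {A B : C} (g : B ⟶ A), g ≫ (ea A).zero = (ea B).zero
  comp_add : ∀ {A B : C} (g : B ⟶ A) (p q s : A ⟶ I),
      (ea A).add p q = some s → (ea B).add (g ≫ p) (g ≫ q) = some (g ≫ s)

namespace EffectTheory

variable {C : Type u} [Category.{v} C] (E : EffectTheory C)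

/-- `q` is the image of `f`: the least effect with `q ∘ f = 1 ∘ f`. -/
def IsImage {A B : C} (f : A ⟶ B) (q : B ⟶ E.I) : Prop :=
  f ≫ q = f ≫ (E.ea B).one ∧
    ∀ r : B ⟶ E.I, f ≫ r = f ≫ (E.ea B).one → (E.ea B).le q r

/-- An effect is sharp when it is the image of some map. -/
def Sharp {A : C} (q : A ⟶ E.I) : Prop := ∃ (B : C) (f : B ⟶ A), E.IsImage f q

/-- `π` is a compression for the effect `q`: `1 ∘ π = q ∘ π`, and `π` is final
with this property. -/
def IsCompression {B A : C} (π : B ⟶ A) (q : A ⟶ E.I) : Prop :=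
  π ≫ (E.ea A).one = π ≫ q ∧
    ∀ {D : C} (f : D ⟶ A), f ≫ (E.ea A).one = f ≫ q → ∃! g : D ⟶ B, f = g ≫ π

/-- `ξ` is a filter for the effect `q`: `1 ∘ ξ ≤ q`, and `ξ` is initial with
this property. -/
def IsFilter {A B : C} (ξ : A ⟶ B) (q : A ⟶ E.I) : Prop :=
  (E.ea A).le (ξ ≫ (E.ea B).one) q ∧
    ∀ {D : C} (f : A ⟶ D), (E.ea A).le (f ≫ (E.ea D).one) q → ∃! g : B ⟶ D, f = ξ ≫ g

/-- A map is pure when it is a filter followed by a compression. -/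
def Pure {A B : C} (f : A ⟶ B) : Prop :=
  ∃ (D : C) (q : A ⟶ E.I) (r : B ⟶ E.I) (ξ : A ⟶ D) (π : D ⟶ B),
    E.IsFilter ξ q ∧ E.IsCompression π r ∧ f = ξ ≫ π

end EffectTheory

/-- A pure effect theory (PET): an effect theory in which every effect has a
filter and a compression, every map has an image, the negation of a sharp
effect is sharp, the pure maps form a dagger category, filters and
compressions of sharp effects are adjoint, and compressions of sharp effects
are isometries. -/
structure PET {C : Type u} [Category.{v} C] (E : EffectTheory C) where
  compObj : ∀ {A : C}, (A ⟶ E.I) → C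
  compr : ∀ {A : C} (q : A ⟶ E.I), compObj q ⟶ A
  compr_is : ∀ {A : C} (q : A ⟶ E.I), E.IsCompression (compr q) q
  filtObj : ∀ {A : C}, (A ⟶ E.I) → C
  filt : ∀ {A : C} (q : A ⟶ E.I), A ⟶ filtObj q
  filt_is : ∀ {A : C} (q : A ⟶ E.I), E.IsFilter (filt q) q
  im : ∀ {A B : C}, (A ⟶ B) → (B ⟶ E.I)
  im_is : ∀ {A B : C} (f : A ⟶ B), E.IsImage f (im f)
  dag : ∀ {A B : C}, (A ⟶ B) → (B ⟶ A)
  pure_id : ∀ A : C, E.Pure (𝟙 A)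
  pure_comp : ∀ {A B D : C} (f : A ⟶ B) (g : B ⟶ D), E.Pure f → E.Pure g → E.Pure (f ≫ g)
  pure_dag : ∀ {A B : C} (f : A ⟶ B), E.Pure f → E.Pure (dag f)
  dag_dag : ∀ {A B : C} (f : A ⟶ B), E.Pure f → dag (dag f) = f
  dag_id : ∀ A : C, dag (𝟙 A) = 𝟙 A
  dag_comp : ∀ {A B D : C} (f : A ⟶ B) (g : B ⟶ D), E.Pure f → E.Pure g →
      dag (f ≫ g) = dag g ≫ dag f
  sharp_compl : ∀ {A : C} (q : A ⟶ E.I), E.Sharp q → E.Sharp ((E.ea A).compl q)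
  dag_compr_filt : ∀ {A B : C} (π : B ⟶ A) (q : A ⟶ E.I), E.Sharp q →
      E.IsCompression π q → E.IsFilter (dag π) q
  dag_filt_compr : ∀ {A B : C} (ξ : A ⟶ B) (q : A ⟶ E.I), E.Sharp q →
      E.IsFilter ξ q → E.IsCompression (dag ξ) q
  compr_isometry : ∀ {A B : C} (π : B ⟶ A) (q : A ⟶ E.I), E.Sharp q →
      E.IsCompression π q → π ≫ dag π = 𝟙 B

namespace PET

variable {C : Type u} [Category.{v} C] {E : EffectTheory C} (P : PET E)

/-- The assert map of an effect `p`: `asrt_p := π_p ∘ π_p†`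
(in diagrammatic order, `π_p†` followed by `π_p`). -/
def asrt {A : C} (p : A ⟶ E.I) : A ⟶ A := P.dag (P.compr p) ≫ P.compr p

end PET

section Aux

namespace EffectAlgebra

variable {E : Type u} (a : EffectAlgebra E)

/-- Cancellation in an effect algebra. -/
theorem cancel {x y₁ y₂ d : E} (h₁ : a.add x y₁ = some d) (h₂ : a.add x y₂ = some d) :
    y₁ = y₂ := by
  obtain ⟨u, hu⟩ := a.compl_exists d
  obtain ⟨w₁, hw₁, hxw₁⟩ := a.add_assoc' y₁ x u d a.one
    (by rw [a.add_comm']; exact h₁) hu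
  obtain ⟨w₂, hw₂, hxw₂⟩ := a.add_assoc' y₂ x u d a.one
    (by rw [a.add_comm']; exact h₂) hu
  rw [hw₁] at hw₂
  have hw : w₁ = w₂ := Option.some.inj hw₂
  subst hw
  exact a.compl_unique w₁ y₁ y₂ (by rw [a.add_comm']; exact hxw₁)
    (by rw [a.add_comm']; exact hxw₂)

theorem zero_add' (x : E) : a.add a.zero x = some x := by
  rw [a.add_comm']; exact a.add_zero' x

theorem eq_zero_of_add_eq_zero {x z : E} (h : a.add x z = some a.zero) : x = a.zero := by
  obtain ⟨w, hw, hxw⟩ := a.add_assoc' x z a.one a.zero a.one h (a.zero_add' a.one)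
  have hz : z = a.zero := a.one_max z w hw
  subst hz
  rw [a.zero_add'] at hw
  have hw1 : w = a.one := (Option.some.inj hw).symm
  subst hw1
  exact a.one_max x a.one hxw

theorem le_antisymm' {x y : E} (h₁ : a.le x y) (h₂ : a.le y x) : x = y := by
  obtain ⟨u, hu⟩ := h₁
  obtain ⟨v, hv⟩ := h₂
  obtain ⟨w, hw, hxw⟩ := a.add_assoc' x u v y x hu hv
  have hw0 : w = a.zero := a.cancel hxw (a.add_zero' x)
  subst hw0
  have hu0 : u = a.zero := a.eq_zero_of_add_eq_zero hw
  subst hu0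
  rw [a.add_zero'] at hu
  exact Option.some.inj hu

/-- If `q + v = t` and `p + t = r` and `p + q = s`, then `s + v = r`. -/
theorem add_shuffle {p q s t v r : E} (hs : a.add p q = some s)
    (hqv : a.add q v = some t) (hpt : a.add p t = some r) : a.add s v = some r := by
  obtain ⟨w, hw, hvw⟩ := a.add_assoc' v q p t r
    (by rw [a.add_comm']; exact hqv) (by rw [a.add_comm']; exact hpt)
  have hws : w = s := by
    rw [a.add_comm'] at hw; rw [hs] at hw; exact (Option.some.inj hw).symm
  subst hws
  rw [a.add_comm']; exact hvw

end EffectAlgebra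

namespace EffectTheory

variable {C : Type u} [Category.{v} C] (E : EffectTheory C)

/-- If `g ∘ x = g ∘ 1` and `x ≤ y` then `g ∘ y = g ∘ 1`. -/
theorem comp_one_of_le {A B : C} (g : B ⟶ A) {x y : A ⟶ E.I}
    (hx : g ≫ x = g ≫ (E.ea A).one) (hxy : (E.ea A).le x y) :
    g ≫ y = g ≫ (E.ea A).one := by
  obtain ⟨u, hu⟩ := hxy
  have h1 : (E.ea B).add (g ≫ x) (g ≫ u) = some (g ≫ y) := E.comp_add g x u y hu
  have h2 : (E.ea B).add (g ≫ y) (g ≫ (E.ea A).compl y) = some (g ≫ (E.ea A).one) :=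
    E.comp_add g y ((E.ea A).compl y) (E.ea A).one ((E.ea A).compl_spec y)
  obtain ⟨w, hw, hxw⟩ := (E.ea B).add_assoc' (g ≫ x) (g ≫ u) (g ≫ (E.ea A).compl y)
    (g ≫ y) (g ≫ (E.ea A).one) h1 h2
  rw [hx] at hxw
  have hw0 : w = (E.ea B).zero := (E.ea B).cancel hxw ((E.ea B).add_zero' _)
  subst hw0
  have hu0 : g ≫ u = (E.ea B).zero := (E.ea B).eq_zero_of_add_eq_zero hw
  rw [hx, hu0, (E.ea B).add_zero'] at h1
  exact (Option.some.inj h1).symm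

/-- If `x ≤ y` and `g ∘ y = 0` then `g ∘ x = 0`. -/
theorem comp_zero_of_le {A B : C} (g : B ⟶ A) {x y : A ⟶ E.I}
    (hy : g ≫ y = (E.ea B).zero) (hxy : (E.ea A).le x y) :
    g ≫ x = (E.ea B).zero := by
  obtain ⟨u, hu⟩ := hxy
  have h1 : (E.ea B).add (g ≫ x) (g ≫ u) = some (g ≫ y) := E.comp_add g x u y hu
  rw [hy] at h1
  exact (E.ea B).eq_zero_of_add_eq_zero h1

/-- If `g ∘ q = g ∘ 1` then `g ∘ q⊥ = 0`. -/
theorem comp_compl_eq_zero {A B : C} (g : B ⟶ A) {x : A ⟶ E.I}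
    (hx : g ≫ x = g ≫ (E.ea A).one) :
    g ≫ (E.ea A).compl x = (E.ea B).zero := by
  have h1 : (E.ea B).add (g ≫ x) (g ≫ (E.ea A).compl x) = some (g ≫ (E.ea A).one) :=
    E.comp_add g x ((E.ea A).compl x) (E.ea A).one ((E.ea A).compl_spec x)
  rw [hx] at h1
  exact (E.ea B).cancel h1 ((E.ea B).add_zero' _)

end EffectTheory

end Aux

/-- In a PET, if `p` and `q` are orthogonal sharp effects
(`p + q` is defined), then `p + q` is sharp and is the least upper bound of
`p` and `q` among all effects. -/
theorem pet_sharp_add_sharp_lub {C : Type u} [Category.{v} C] {E : EffectTheory C}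
    (P : PET E) {A : C} (p q s : A ⟶ E.I) (hp : E.Sharp p) (hq : E.Sharp q)
    (hs : (E.ea A).add p q = some s) :
    E.Sharp s ∧ (E.ea A).le p s ∧ (E.ea A).le q s ∧
      ∀ r : A ⟶ E.I, (E.ea A).le p r → (E.ea A).le q r → (E.ea A).le s r := by
  obtain ⟨B, f, hfq, hfleast⟩ := id hq
  -- p ≤ q⊥
  have hpcq : (E.ea A).le p ((E.ea A).compl q) := by
    obtain ⟨w, hw, hqw⟩ := (E.ea A).add_assoc' q p ((E.ea A).compl s) s (E.ea A).one
      (by rw [(E.ea A).add_comm']; exact hs) ((E.ea A).compl_spec s)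
    have hwq : w = (E.ea A).compl q :=
      (E.ea A).compl_unique q w ((E.ea A).compl q) hqw ((E.ea A).compl_spec q)
    exact ⟨(E.ea A).compl s, hwq ▸ hw⟩
  -- the least-upper-bound property
  have hlub : ∀ r : A ⟶ E.I, (E.ea A).le p r → (E.ea A).le q r → (E.ea A).le s r := by
    intro r hpr hqr
    obtain ⟨t, ht⟩ := hpr
    -- f ∘ q⊥ = 0, hence f ∘ p = 0
    have hfcq : f ≫ (E.ea A).compl q = (E.ea B).zero := E.comp_compl_eq_zero f hfq
    have hfp : f ≫ p = (E.ea B).zero := E.comp_zero_of_le f hfcq hpcq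
    -- f ∘ r = f ∘ 1
    have hfr : f ≫ r = f ≫ (E.ea A).one := E.comp_one_of_le f hfq hqr
    -- f ∘ t = f ∘ 1
    have h1 : (E.ea B).add (f ≫ p) (f ≫ t) = some (f ≫ r) := E.comp_add f p t r ht
    rw [hfp, hfr, (E.ea B).add_comm', (E.ea B).add_zero'] at h1
    have hft : f ≫ t = f ≫ (E.ea A).one := Option.some.inj h1
    -- hence q ≤ t by leastness of the image q
    obtain ⟨v, hv⟩ := hfleast t hft
    exact ⟨v, (E.ea A).add_shuffle hs hv ht⟩
  -- p ≤ s and q ≤ s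
  have hps : (E.ea A).le p s := ⟨q, hs⟩
  have hqs : (E.ea A).le q s := ⟨p, by rw [(E.ea A).add_comm']; exact hs⟩
  -- sharpness of s: show s = im (compr s)
  refine ⟨?_, hps, hqs, hlub⟩
  set π := P.compr s with hπ
  have hπ1 : π ≫ (E.ea A).one = π ≫ s := (P.compr_is s).1
  have him1 : π ≫ P.im π = π ≫ (E.ea A).one := (P.im_is π).1
  -- im π ≤ s
  have him_le : (E.ea A).le (P.im π) s := (P.im_is π).2 s hπ1.symm
  -- generic: any sharp effect below s is below im π
  have key : ∀ x : A ⟶ E.I, E.Sharp x → (E.ea A).le x s → (E.ea A).le x (P.im π) := by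
    intro x hx hxs
    obtain ⟨D, g, hgx, hgleast⟩ := hx
    have hgs : g ≫ s = g ≫ (E.ea A).one := E.comp_one_of_le g hgx hxs
    obtain ⟨h, hgh, -⟩ := (P.compr_is s).2 g hgs.symm
    have : g ≫ P.im π = g ≫ (E.ea A).one := by
      rw [hgh, Category.assoc, Category.assoc, him1]
    exact hgleast (P.im π) this
  have hp_im : (E.ea A).le p (P.im π) := key p hp hps
  have hq_im : (E.ea A).le q (P.im π) := key q hq hqs
  have hs_im : (E.ea A).le s (P.im π) := hlub (P.im π) hp_im hq_im
  have hs_eq : s = P.im π := (E.ea A).le_antisymm' hs_im him_le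
  rw [hs_eq]
  exact ⟨P.compObj s, π, P.im_is π⟩
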